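/- If Q is a countable thin quasi-order, then [Q]^{<ω}, the set of finite subsets of Q ordered by: a ≤ b iff there is an injective map h : a → b with x ≤_Q h(x) for all x ∈ a, is thin. -/

import Mathlib

/-- The shift map on sequences. -/
def seqShift {Q : Type*} (X : ℕ → Q) : ℕ → Q := fun k => X (k + 1)

/-- The set `Q⃗` of sequences `X` with `¬ r (X k) (X (k+1))` for all `k`. -/
def vecSet {Q : Type*} (r : Q → Q → Prop) : Set (ℕ → Q) :=
  {X | ∀ k, ¬ r (X k) (X (k + 1))}

/-- The shift graph on a subset `A` of `Qᴺ` (with `Q` discrete, `Qᴺ` carrying the product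
Borel structure) admits a Borel proper 3-colouring. -/
def Colour3 {Q : Type*} (A : Set (ℕ → Q)) : Prop :=
  letI : MeasurableSpace Q := ⊤
  ∃ c : A → Fin 3, Measurable c ∧
    ∀ (X : ℕ → Q) (hX : X ∈ A) (hX' : seqShift X ∈ A),
      c ⟨X, hX⟩ ≠ c ⟨seqShift X, hX'⟩

/-- A relation `r` on `Q` is *thin* if the shift graph on `Q⃗ = vecSet r`
is Borel 3-colourable; otherwise it is *thick*. -/
def IsThin {Q : Type*} (r : Q → Q → Prop) : Prop := Colour3 (vecSet r)

open Function
open Fin.NatCast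

namespace ThinFS

attribute [local instance] Classical.propDecidable

variable {Q : Type*} (r : Q → Q → Prop)

/-- neighbours of `a` inside `b`. -/
noncomputable def nbr (a b : Finset Q) : Finset Q := b.filter (fun y => ∃ x ∈ a, r x y)

/-- the finset domination relation -/
def dom (a b : Finset Q) : Prop :=
  ∃ h : {x : Q // x ∈ a} → {x : Q // x ∈ b},
    Function.Injective h ∧ ∀ x : {x : Q // x ∈ a}, r x.1 (h x).1

def Deficient (a b t : Finset Q) : Prop := t ⊆ a ∧ (nbr r t b).card < t.card

lemma mem_nbr {a b : Finset Q} {y : Q} :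
    y ∈ nbr r a b ↔ y ∈ b ∧ ∃ x ∈ a, r x y := Finset.mem_filter

lemma exists_deficient_of_not_dom {a b : Finset Q} (h : ¬ dom r a b) :
    ∃ t, Deficient r a b t := by
  by_contra hno
  push_neg at hno
  apply h
  have hall := (Finset.all_card_le_biUnion_card_iff_exists_injective
      (fun x : {x : Q // x ∈ a} => nbr r {x.1} b)).1 ?_
  · obtain ⟨f, hfinj, hf⟩ := hall
    refine ⟨fun x => ⟨f x, ((mem_nbr r).1 (hf x)).1⟩, ?_, ?_⟩
    · intro x y hxy
      exact hfinj (congrArg Subtype.val hxy)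
    · intro x
      obtain ⟨z, hz, hrz⟩ := ((mem_nbr r).1 (hf x)).2
      rwa [Finset.mem_singleton.1 hz] at hrz
  · intro s
    set u : Finset Q := s.image Subtype.val with hu
    have husub : u ⊆ a := by
      intro y hy
      obtain ⟨x, _, rfl⟩ := Finset.mem_image.1 hy
      exact x.2
    have hcard : u.card = s.card := Finset.card_image_of_injective s Subtype.coe_injective
    have hbiU : s.biUnion (fun x : {x : Q // x ∈ a} => nbr r {x.1} b) = nbr r u b := by
      ext y
      simp only [Finset.mem_biUnion, mem_nbr, Finset.mem_singleton, hu, Finset.mem_image]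
      constructor
      · rintro ⟨x, hxs, hyb, z, rfl, hrz⟩
        exact ⟨hyb, x.1, ⟨x, hxs, rfl⟩, hrz⟩
      · rintro ⟨hyb, z, ⟨x, hxs, rfl⟩, hrz⟩
        exact ⟨x, hxs, hyb, x.1, rfl, hrz⟩
    rw [hbiU]
    have := hno u
    rw [Deficient] at this
    push_neg at this
    have := this husub
    omega

lemma not_dom_of_deficient {a b s t : Finset Q} (hs : Deficient r a b s) (ht : t ⊆ b) :
    ¬ dom r s t := by
  rintro ⟨h, hinj, hrel⟩
  let f : {x : Q // x ∈ s} → {y : Q // y ∈ nbr r s b} := fun x =>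
    ⟨(h x).1, (mem_nbr r).2 ⟨ht (h x).2, x.1, x.2, hrel x⟩⟩
  have hfinj : Function.Injective f := by
    intro x y hxy
    exact hinj (Subtype.ext (by simpa [f] using congrArg Subtype.val hxy))
  have hle := Fintype.card_le_of_injective f hfinj
  rw [Fintype.card_coe, Fintype.card_coe] at hle
  have h2 := hs.2
  omega


/-- a canonical deficient subset (or junk). -/
noncomputable def core (a b : Finset Q) : Finset Q :=
  if h : ∃ t, Deficient r a b t then h.choose else a

lemma core_subset (a b : Finset Q) : core r a b ⊆ a := by
  rw [core]
  split
  · next h => exact h.choose_spec.1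
  · exact Finset.Subset.refl a

lemma core_deficient {a b : Finset Q} (h : ¬ dom r a b) :
    Deficient r a b (core r a b) := by
  have he := exists_deficient_of_not_dom r h
  rw [core, dif_pos he]
  exact he.choose_spec

/-- one step of the derivation. -/
noncomputable def kap (A : ℕ → Finset Q) : ℕ → Finset Q := fun k => core r (A k) (A (k + 1))

noncomputable def kapIt : ℕ → (ℕ → Finset Q) → ℕ → Finset Q
  | 0, A => A
  | (m + 1), A => kap r (kapIt m A)

/-- bad sequences of finsets. -/
def BadSeq (A : ℕ → Finset Q) : Prop := ∀ k, ¬ dom r (A k) (A (k + 1))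

lemma kap_shift (A : ℕ → Finset Q) (k : ℕ) :
    kap r (seqShift A) k = kap r A (k + 1) := rfl

@[simp] lemma kapIt_shift (m : ℕ) (A : ℕ → Finset Q) (k : ℕ) :
    kapIt r m (seqShift A) k = kapIt r m A (k + 1) := by
  induction m generalizing k with
  | zero => rfl
  | succ m ih =>
    show core r (kapIt r m (seqShift A) k) (kapIt r m (seqShift A) (k+1))
        = core r (kapIt r m A (k+1)) (kapIt r m A (k+2))
    rw [ih, ih]

lemma kapIt_succ_subset (m : ℕ) (A : ℕ → Finset Q) (k : ℕ) :
    kapIt r (m + 1) A k ⊆ kapIt r m A k := core_subset r _ _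

lemma kapIt_le {m n : ℕ} (h : m ≤ n) (A : ℕ → Finset Q) (k : ℕ) :
    kapIt r n A k ⊆ kapIt r m A k := by
  induction n with
  | zero => 
    have : m = 0 := Nat.le_zero.1 h
    subst this; exact Finset.Subset.refl _
  | succ n ih =>
    rcases Nat.lt_or_ge m (n+1) with hlt | hge
    · exact (kapIt_succ_subset r n A k).trans (ih (Nat.lt_succ_iff.1 hlt))
    · have : m = n + 1 := le_antisymm h hge
      subst this; exact Finset.Subset.refl _

lemma bad_kap {A : ℕ → Finset Q} (hA : BadSeq r A) : BadSeq r (kap r A) := by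
  intro k
  have h1 : Deficient r (A k) (A (k+1)) (core r (A k) (A (k+1))) := core_deficient r (hA k)
  exact not_dom_of_deficient r h1 (core_subset r _ _)

lemma bad_kapIt (m : ℕ) {A : ℕ → Finset Q} (hA : BadSeq r A) : BadSeq r (kapIt r m A) := by
  induction m with
  | zero => exact hA
  | succ m ih => exact bad_kap r ih

/-- the stable derived sequence. -/
noncomputable def Efun (A : ℕ → Finset Q) : ℕ → Finset Q :=
  fun k => (A k).filter (fun x => ∀ m, x ∈ kapIt r m A k)

lemma Efun_stab (A : ℕ → Finset Q) (k : ℕ) :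
    ∃ M, ∀ m, M ≤ m → kapIt r m A k = Efun r A k := by
  have hex : ∃ n, ∃ m, (kapIt r m A k).card = n := ⟨(kapIt r 0 A k).card, 0, rfl⟩
  obtain ⟨M, hM⟩ := Nat.find_spec hex
  have hconst : ∀ m, M ≤ m → kapIt r m A k = kapIt r M A k := by
    intro m hm
    have hsub : kapIt r m A k ⊆ kapIt r M A k := kapIt_le r hm A k
    have hge : Nat.find hex ≤ (kapIt r m A k).card := Nat.find_min' hex ⟨m, rfl⟩
    exact Finset.eq_of_subset_of_card_le hsub (by omega)
  have hEq : kapIt r M A k = Efun r A k := by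
    ext x
    rw [Efun, Finset.mem_filter]
    constructor
    · intro hx
      refine ⟨kapIt_le r (Nat.zero_le M) A k hx, fun m => ?_⟩
      rcases le_total m M with hm | hm
      · exact kapIt_le r hm A k hx
      · rw [hconst m hm]; exact hx
    · rintro ⟨-, hall⟩
      exact hall M
  exact ⟨M, fun m hm => (hconst m hm).trans hEq⟩

@[simp] lemma Efun_shift (A : ℕ → Finset Q) (k : ℕ) :
    Efun r (seqShift A) k = Efun r A (k + 1) := by
  have h1 : ∀ m, kapIt r m (seqShift A) k = kapIt r m A (k+1) := fun m => kapIt_shift r m A k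
  rw [Efun, Efun]
  show (A (k+1)).filter _ = (A (k+1)).filter _
  apply Finset.filter_congr
  intro x _
  constructor
  · intro h m; rw [← h1 m]; exact h m
  · intro h m; rw [h1 m]; exact h m

lemma bad_Efun {A : ℕ → Finset Q} (hA : BadSeq r A) : BadSeq r (Efun r A) := by
  intro k
  obtain ⟨M1, h1⟩ := Efun_stab r A k
  obtain ⟨M2, h2⟩ := Efun_stab r A (k+1)
  have e1 := h1 (max M1 M2) (le_max_left _ _)
  have e2 := h2 (max M1 M2) (le_max_right _ _)
  rw [← e1, ← e2]
  exact bad_kapIt r (max M1 M2) hA k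

lemma Efun_fixed (A : ℕ → Finset Q) (k : ℕ) :
    core r (Efun r A k) (Efun r A (k + 1)) = Efun r A k := by
  obtain ⟨M1, h1⟩ := Efun_stab r A k
  obtain ⟨M2, h2⟩ := Efun_stab r A (k+1)
  set M := max M1 M2
  have e1 := h1 M (le_max_left _ _)
  have e2 := h2 M (le_max_right _ _)
  have e3 := h1 (M + 1) (le_trans (le_max_left _ _) (Nat.le_succ M))
  calc core r (Efun r A k) (Efun r A (k + 1)) 
      = kapIt r (M + 1) A k := by rw [← e1, ← e2]; rfl
    _ = Efun r A k := e3

lemma Efun_deficient {A : ℕ → Finset Q} (hA : BadSeq r A) (k : ℕ) :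
    (nbr r (Efun r A k) (Efun r A (k + 1))).card < (Efun r A k).card := by
  have h := core_deficient r (bad_Efun r hA k)
  rw [Efun_fixed r A k] at h
  exact h.2

lemma Efun_card_pos {A : ℕ → Finset Q} (hA : BadSeq r A) (k : ℕ) :
    0 < (Efun r A k).card := by
  have := Efun_deficient r hA k
  omega

/-- the marking predicate. -/
def pP (A : ℕ → Finset Q) (k : ℕ) : Prop :=
  Efun r A (k + 1) ⊆ nbr r (Efun r A k) (Efun r A (k + 1))

lemma pP_shift (A : ℕ → Finset Q) (k : ℕ) : pP r (seqShift A) k ↔ pP r A (k + 1) := by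
  rw [pP, pP, Efun_shift, Efun_shift]

lemma no_ev_all_p {A : ℕ → Finset Q} (hA : BadSeq r A) :
    ¬ ∃ K, ∀ k, K ≤ k → pP r A k := by
  rintro ⟨K, hK⟩
  have hlt : ∀ k, K ≤ k → (Efun r A (k+1)).card < (Efun r A k).card := by
    intro k hk
    have h1 : (Efun r A (k+1)).card ≤ (nbr r (Efun r A k) (Efun r A (k+1))).card :=
      Finset.card_le_card (hK k hk)
    have h2 := Efun_deficient r hA k
    omega
  have hdesc : ∀ j, (Efun r A (K + j)).card + j ≤ (Efun r A K).card := by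
    intro j
    induction j with
    | zero => simp
    | succ j ih =>
      have := hlt (K + j) (Nat.le_add_right _ _)
      have hrw : K + (j + 1) = (K + j) + 1 := rfl
      rw [hrw]
      omega
  have := hdesc ((Efun r A K).card + 1)
  omega

/-- `p` eventually always fails. -/
def evNP (A : ℕ → Finset Q) : Prop := ∃ K, ∀ k, K ≤ k → ¬ pP r A k

noncomputable def kzero (A : ℕ → Finset Q) : ℕ :=
  if h : evNP r A then Nat.find h else 0

lemma evNP_shift (A : ℕ → Finset Q) : evNP r (seqShift A) ↔ evNP r A := by
  constructor
  · rintro ⟨K, hK⟩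
    refine ⟨K + 1, fun k hk => ?_⟩
    have h1 : K ≤ k - 1 := by omega
    have h2 := hK (k - 1) h1
    rw [pP_shift] at h2
    have : k - 1 + 1 = k := by omega
    rwa [this] at h2
  · rintro ⟨K, hK⟩
    refine ⟨K, fun k hk => ?_⟩
    rw [pP_shift]
    exact hK (k + 1) (by omega)

lemma kzero_shift_pos {A : ℕ → Finset Q} (h : evNP r A) {K : ℕ} (hK : kzero r A = K + 1) :
    kzero r (seqShift A) = K := by
  have hS : evNP r (seqShift A) := (evNP_shift r A).2 h
  rw [kzero, dif_pos h] at hK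
  rw [kzero, dif_pos hS]
  replace hK := (Nat.find_eq_iff (h := h)).1 hK
  refine (Nat.find_eq_iff (h := hS)).2 ?_
  obtain ⟨hK1, hK2⟩ := hK
  constructor
  · intro k hk
    rw [pP_shift]
    exact hK1 (k + 1) (by omega)
  · intro n hn hall
    apply hK2 (n + 1) (by omega)
    intro k hk
    have hk1 : k - 1 + 1 = k := by omega
    have := hall (k - 1) (by omega)
    rw [pP_shift, hk1] at this
    exact this

lemma kzero_shift_zero {A : ℕ → Finset Q} (h : evNP r A) (hK : kzero r A = 0) :
    kzero r (seqShift A) = 0 := by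
  have hS : evNP r (seqShift A) := (evNP_shift r A).2 h
  rw [kzero, dif_pos h] at hK
  rw [kzero, dif_pos hS]
  replace hK := (Nat.find_eq_zero (h := h)).1 hK
  refine (Nat.find_eq_zero (h := hS)).2 ?_
  intro k _
  rw [pP_shift]
  exact hK (k + 1) (by omega)

section WithNonempty
variable [Nonempty Q]

noncomputable def sel (a b : Finset Q) : Q :=
  if h : (b \ nbr r a b).Nonempty then h.choose else Classical.arbitrary Q

lemma sel_mem {a b : Finset Q} (h : (b \ nbr r a b).Nonempty) :
    sel r a b ∈ b \ nbr r a b := by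
  rw [sel, dif_pos h]
  exact h.choose_spec

noncomputable def Psi (A : ℕ → Finset Q) : ℕ → Q :=
  fun i => sel r (Efun r A (kzero r A + i)) (Efun r A (kzero r A + i + 1))

omit [Nonempty Q] in
lemma kzero_spec {A : ℕ → Finset Q} (h : evNP r A) :
    ∀ k, kzero r A ≤ k → ¬ pP r A k := by
  rw [kzero, dif_pos h]
  exact Nat.find_spec h

omit [Nonempty Q] in
lemma sdiff_ne {A : ℕ → Finset Q} (h : evNP r A) {k : ℕ} (hk : kzero r A ≤ k) :
    (Efun r A (k + 1) \ nbr r (Efun r A k) (Efun r A (k + 1))).Nonempty := by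
  have hnp := kzero_spec r h k hk
  rw [pP] at hnp
  exact Finset.sdiff_nonempty.2 hnp

lemma Psi_mem_vecSet {A : ℕ → Finset Q} (h : evNP r A) : Psi r A ∈ vecSet r := by
  intro i
  set z := kzero r A with hz
  have h1 := sel_mem r (sdiff_ne r h (Nat.le_add_right z i))
  have h2 := sel_mem r (sdiff_ne r h (Nat.le_add_right z (i + 1)))
  have e1 : Psi r A i = sel r (Efun r A (z + i)) (Efun r A (z + i + 1)) := rfl
  have e2 : Psi r A (i + 1) = sel r (Efun r A (z + i + 1)) (Efun r A (z + i + 1 + 1)) := by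
    show sel r (Efun r A (z + (i + 1))) (Efun r A (z + (i + 1) + 1)) = _
    have : z + (i + 1) = z + i + 1 := by omega
    rw [this]
  intro hrel
  rw [e1, e2] at hrel
  have hz2 : z + (i + 1) = z + i + 1 := by omega
  rw [hz2] at h2
  have hx1 : sel r (Efun r A (z + i)) (Efun r A (z + i + 1)) ∈ Efun r A (z + i + 1) :=
    (Finset.mem_sdiff.1 h1).1
  have hx2 := Finset.mem_sdiff.1 h2
  apply hx2.2
  exact (mem_nbr r).2 ⟨hx2.1, _, hx1, hrel⟩

lemma Psi_shift_zero {A : ℕ → Finset Q} (h : evNP r A) (hK : kzero r A = 0) :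
    Psi r (seqShift A) = seqShift (Psi r A) := by
  funext i
  have hS0 := kzero_shift_zero r h hK
  show sel r (Efun r (seqShift A) (kzero r (seqShift A) + i))
      (Efun r (seqShift A) (kzero r (seqShift A) + i + 1)) = Psi r A (i + 1)
  rw [hS0, Efun_shift, Efun_shift]
  show sel r (Efun r A (0 + i + 1)) (Efun r A (0 + i + 1 + 1)) = 
    sel r (Efun r A (kzero r A + (i+1))) (Efun r A (kzero r A + (i+1) + 1))
  rw [hK]
  have e1 : (0 : ℕ) + i + 1 = 0 + (i + 1) := by omega
  rw [e1]

lemma Psi_shift_pos {A : ℕ → Finset Q} (h : evNP r A) {K : ℕ} (hK : kzero r A = K + 1) :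
    Psi r (seqShift A) = Psi r A := by
  funext i
  have hSK := kzero_shift_pos r h hK
  show sel r (Efun r (seqShift A) (kzero r (seqShift A) + i))
      (Efun r (seqShift A) (kzero r (seqShift A) + i + 1)) = 
    sel r (Efun r A (kzero r A + i)) (Efun r A (kzero r A + i + 1))
  rw [hSK, Efun_shift, Efun_shift, hK]
  have e1 : K + i + 1 = K + 1 + i := by omega
  rw [e1]

end WithNonempty

lemma vecSet_shift {P : Type*} {ρ : P → P → Prop} {X : ℕ → P} (h : X ∈ vecSet ρ) :
    seqShift X ∈ vecSet ρ := fun k => h (k + 1)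

/-- marking colours -/
noncomputable def dE (A : ℕ → Finset Q) : ℕ :=
  if h : ∃ j, pP r A (j + 1) then Nat.find h + 1 else 0

noncomputable def eE (A : ℕ → Finset Q) : ℕ :=
  if h : ∃ j, ¬ pP r A (j + 1) then Nat.find h + 1 else 0

noncomputable def colMark (A : ℕ → Finset Q) : Fin 3 :=
  if pP r A 0 then (if eE r A % 2 = 1 then 2 else 0)
  else (if dE r A % 2 = 1 then 1 else 0)

lemma colMark_ne {A : ℕ → Finset Q} (hA : BadSeq r A) (hm : ¬ evNP r A) :
    colMark r A ≠ colMark r (seqShift A) := by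
  have hunm : ∀ K, ∃ k, K ≤ k ∧ ¬ pP r A k := by
    have h := no_ev_all_p r hA
    push_neg at h
    exact h
  have hmk : ∀ K, ∃ k, K ≤ k ∧ pP r A k := by
    rw [evNP] at hm
    push_neg at hm
    exact hm
  have hA_e : ∃ j, ¬ pP r A (j + 1) := by
    obtain ⟨k, hk, hnp⟩ := hunm 1
    refine ⟨k - 1, ?_⟩
    have : k - 1 + 1 = k := by omega
    rwa [this]
  have hA_d : ∃ j, pP r A (j + 1) := by
    obtain ⟨k, hk, hp⟩ := hmk 1
    refine ⟨k - 1, ?_⟩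
    have : k - 1 + 1 = k := by omega
    rwa [this]
  have hS_e : ∃ j, ¬ pP r (seqShift A) (j + 1) := by
    obtain ⟨k, hk, hnp⟩ := hunm 2
    refine ⟨k - 2, ?_⟩
    rw [pP_shift]
    have : k - 2 + 1 + 1 = k := by omega
    rwa [this]
  have hS_d : ∃ j, pP r (seqShift A) (j + 1) := by
    obtain ⟨k, hk, hp⟩ := hmk 2
    refine ⟨k - 2, ?_⟩
    rw [pP_shift]
    have : k - 2 + 1 + 1 = k := by omega
    rwa [this]
  by_cases hp0 : pP r A 0
  · -- position 0 marked
    rw [colMark, if_pos hp0, eE, dif_pos hA_e]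
    cases hn : Nat.find hA_e with
    | zero =>
      -- ¬ pP A 1, so shift is unmarked
      have h1 : ¬ pP r A 1 := by
        have := Nat.find_spec hA_e
        rwa [hn] at this
      have hs0 : ¬ pP r (seqShift A) 0 := by
        rw [pP_shift]; exact h1
      rw [colMark, if_neg hs0]
      split <;> split <;> simp_all <;> decide
    | succ m =>
      have h1 : pP r A 1 := by
        have := Nat.find_min hA_e (show 0 < Nat.find hA_e by omega)
        simpa using this
      have hs0 : pP r (seqShift A) 0 := by
        rw [pP_shift]; exact h1
      rw [colMark, if_pos hs0, eE, dif_pos hS_e]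
      have hfind : Nat.find hS_e = m := by
        rw [Nat.find_eq_iff]
        constructor
        · rw [pP_shift]
          have := Nat.find_spec hA_e
          rw [hn] at this
          exact this
        · intro j hj hnegp
          rw [pP_shift] at hnegp
          exact hnegp (by
            have := Nat.find_min hA_e (show j + 1 < Nat.find hA_e by omega)
            simpa using this)
      rw [hfind]
      by_cases hpar : (m + 1) % 2 = 1
      · have hpar2 : (m + 1 + 1) % 2 = 0 := by omega
        rw [if_neg (by omega), if_pos hpar]
        decide
      · have hpar2 : (m + 1 + 1) % 2 = 1 := by omega
        rw [if_pos hpar2, if_neg (by omega)]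
        decide
  · -- position 0 unmarked
    rw [colMark, if_neg hp0, dE, dif_pos hA_d]
    cases hn : Nat.find hA_d with
    | zero =>
      have h1 : pP r A 1 := by
        have := Nat.find_spec hA_d
        rwa [hn] at this
      have hs0 : pP r (seqShift A) 0 := by
        rw [pP_shift]; exact h1
      rw [colMark, if_pos hs0]
      split <;> split <;> simp_all <;> decide
    | succ m =>
      have h1 : ¬ pP r A 1 := by
        have := Nat.find_min hA_d (show 0 < Nat.find hA_d by omega)
        simpa using this
      have hs0 : ¬ pP r (seqShift A) 0 := by
        rw [pP_shift]; exact h1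
      rw [colMark, if_neg hs0, dE, dif_pos hS_d]
      have hfind : Nat.find hS_d = m := by
        rw [Nat.find_eq_iff]
        constructor
        · rw [pP_shift]
          have := Nat.find_spec hA_d
          rw [hn] at this
          exact this
        · intro j hj hnegp
          rw [pP_shift] at hnegp
          have := Nat.find_min hA_d (show j + 1 < Nat.find hA_d by omega)
          exact this hnegp
      rw [hfind]
      by_cases hpar : (m + 1) % 2 = 1
      · have hpar2 : (m + 1 + 1) % 2 = 0 := by omega
        rw [if_neg (by omega), if_pos hpar]
        decide
      · have hpar2 : (m + 1 + 1) % 2 = 1 := by omega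
        rw [if_pos hpar2, if_neg (by omega)]
        decide

section Col
variable [Nonempty Q]

/-- total extension of the colouring of `vecSet r`. -/
noncomputable def cext (c0 : (vecSet r) → Fin 3) : (ℕ → Q) → Fin 3 :=
  fun X => if h : X ∈ vecSet r then c0 ⟨X, h⟩ else 0

noncomputable def colNP (c0 : (vecSet r) → Fin 3) (A : ℕ → Finset Q) : Fin 3 :=
  cext r c0 (Psi r A) + (kzero r A : Fin 3)

noncomputable def colAll (c0 : (vecSet r) → Fin 3) (A : ℕ → Finset Q) : Fin 3 :=
  if evNP r A then colNP r c0 A else colMark r A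

lemma fin3_succ_ne (x : Fin 3) : x + 1 ≠ x := by revert x; decide

lemma colNP_ne {c0 : (vecSet r) → Fin 3}
    (hc0 : ∀ (X : ℕ → Q) (hX : X ∈ vecSet r) (hX' : seqShift X ∈ vecSet r),
      c0 ⟨X, hX⟩ ≠ c0 ⟨seqShift X, hX'⟩)
    {A : ℕ → Finset Q} (hev : evNP r A) :
    colNP r c0 A ≠ colNP r c0 (seqShift A) := by
  cases hK : kzero r A with
  | zero =>
    have hS0 := kzero_shift_zero r hev hK
    have hPsi := Psi_shift_zero r hev hK
    rw [colNP, colNP, hK, hS0, hPsi]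
    have h1 : Psi r A ∈ vecSet r := Psi_mem_vecSet r hev
    have h2 : seqShift (Psi r A) ∈ vecSet r := vecSet_shift h1
    simp only [Nat.cast_zero, add_zero]
    rw [cext, cext, dif_pos h1, dif_pos h2]
    exact hc0 _ h1 h2
  | succ K =>
    have hSK := kzero_shift_pos r hev hK
    have hPsi := Psi_shift_pos r hev hK
    rw [colNP, colNP, hK, hSK, hPsi]
    intro hEq
    have := add_left_cancel hEq
    rw [Nat.cast_succ] at this
    exact fin3_succ_ne (K : Fin 3) this

lemma colAll_ne {c0 : (vecSet r) → Fin 3}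
    (hc0 : ∀ (X : ℕ → Q) (hX : X ∈ vecSet r) (hX' : seqShift X ∈ vecSet r),
      c0 ⟨X, hX⟩ ≠ c0 ⟨seqShift X, hX'⟩)
    {A : ℕ → Finset Q} (hA : BadSeq r A) :
    colAll r c0 A ≠ colAll r c0 (seqShift A) := by
  by_cases hev : evNP r A
  · have hevS : evNP r (seqShift A) := (evNP_shift r A).2 hev
    rw [colAll, colAll, if_pos hev, if_pos hevS]
    exact colNP_ne r hc0 hev
  · have hevS : ¬ evNP r (seqShift A) := fun h => hev ((evNP_shift r A).1 h)
    rw [colAll, colAll, if_neg hev, if_neg hevS]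
    exact colMark_ne r hA hev

end Col
section Meas
variable [Countable Q]

abbrev mes1 : MeasurableSpace Q := ⊤
abbrev mes2 : MeasurableSpace (Finset Q) := ⊤

attribute [local instance] mes1 mes2

local instance : MeasurableSingletonClass (Finset Q) :=
  ⟨fun _ => MeasurableSpace.measurableSet_top⟩
local instance : MeasurableSingletonClass Q :=
  ⟨fun _ => MeasurableSpace.measurableSet_top⟩

lemma meas_kapIt (m k : ℕ) : Measurable (fun A : ℕ → Finset Q => kapIt r m A k) := by
  induction m generalizing k with
  | zero => exact measurable_pi_apply k
  | succ m ih =>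
    have : (fun A : ℕ → Finset Q => kapIt r (m + 1) A k)
        = (fun p : Finset Q × Finset Q => core r p.1 p.2)
          ∘ (fun A => (kapIt r m A k, kapIt r m A (k + 1))) := rfl
    rw [this]
    exact (measurable_of_countable _).comp ((ih k).prodMk (ih (k + 1)))

lemma meas_Efun (k : ℕ) : Measurable (fun A : ℕ → Finset Q => Efun r A k) := by
  apply measurable_to_countable'
  intro s
  have hset : (fun A : ℕ → Finset Q => Efun r A k) ⁻¹' {s}
      = ⋃ M, ⋂ m, (fun A : ℕ → Finset Q => kapIt r (M + m) A k) ⁻¹' {s} := by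
    ext A
    simp only [Set.mem_preimage, Set.mem_singleton_iff, Set.mem_iUnion, Set.mem_iInter]
    constructor
    · intro h
      obtain ⟨M, hM⟩ := Efun_stab r A k
      exact ⟨M, fun m => by rw [hM (M + m) (by omega), h]⟩
    · rintro ⟨M, hM⟩
      obtain ⟨M', hM'⟩ := Efun_stab r A k
      have h1 := hM M'
      rw [hM' (M + M') (by omega)] at h1
      exact h1
  rw [hset]
  exact MeasurableSet.iUnion fun M => MeasurableSet.iInter fun m =>
    (meas_kapIt r _ k) (measurableSet_singleton s)

lemma meas_pairE (k : ℕ) :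
    Measurable (fun A : ℕ → Finset Q => (Efun r A k, Efun r A (k + 1))) :=
  (meas_Efun r k).prodMk (meas_Efun r (k + 1))

lemma measSet_pP (k : ℕ) : MeasurableSet {A : ℕ → Finset Q | pP r A k} := by
  have hset : {A : ℕ → Finset Q | pP r A k}
      = (fun A : ℕ → Finset Q => (Efun r A k, Efun r A (k + 1))) ⁻¹'
        {p : Finset Q × Finset Q | p.2 ⊆ nbr r p.1 p.2} := rfl
  rw [hset]
  exact (meas_pairE r k) ((Set.to_countable _).measurableSet)

lemma measSet_evNP : MeasurableSet {A : ℕ → Finset Q | evNP r A} := by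
  have hset : {A : ℕ → Finset Q | evNP r A} = ⋃ K, ⋂ j, {A : ℕ → Finset Q | pP r A (K + j)}ᶜ := by
    ext A
    simp only [Set.mem_setOf_eq, Set.mem_iUnion, Set.mem_iInter, Set.mem_compl_iff, evNP]
    constructor
    · rintro ⟨K, hK⟩
      exact ⟨K, fun j => hK (K + j) (by omega)⟩
    · rintro ⟨K, hK⟩
      refine ⟨K, fun k hk => ?_⟩
      have := hK (k - K)
      have e : K + (k - K) = k := by omega
      rwa [e] at this
  rw [hset]
  exact MeasurableSet.iUnion fun K => MeasurableSet.iInter fun j => (measSet_pP r _).compl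

lemma meas_kzero : Measurable (fun A : ℕ → Finset Q => kzero r A) := by
  apply measurable_to_countable'
  intro n
  have hset : (fun A : ℕ → Finset Q => kzero r A) ⁻¹' {n}
      = ((⋂ j, {A : ℕ → Finset Q | pP r A (n + j)}ᶜ) ∩
          ⋂ m, ⋂ (_ : m < n), ((⋂ j, {A : ℕ → Finset Q | pP r A (m + j)}ᶜ)ᶜ))
        ∪ (if n = 0 then {A : ℕ → Finset Q | evNP r A}ᶜ else ∅) := by
    ext A
    simp only [Set.mem_preimage, Set.mem_singleton_iff, Set.mem_union, Set.mem_inter_iff,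
      Set.mem_iInter, Set.mem_compl_iff, Set.mem_setOf_eq]
    constructor
    · intro h
      by_cases hev : evNP r A
      · left
        rw [kzero, dif_pos hev] at h
        replace h := (Nat.find_eq_iff (h := hev)).1 h
        obtain ⟨h1, h2⟩ := h
        constructor
        · intro j
          exact h1 (n + j) (by omega)
        · intro m hm hall
          apply h2 m hm
          intro k hk
          have := hall (k - m)
          have e : m + (k - m) = k := by omega
          rwa [e] at this
      · right
        rw [kzero, dif_neg hev] at h
        rw [if_pos h.symm]
        exact hev
    · intro h
      rcases h with ⟨h1, h2⟩ | h
      · have hev : evNP r A := ⟨n, fun k hk => by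
          have := h1 (k - n)
          have e : n + (k - n) = k := by omega
          rwa [e] at this⟩
        rw [kzero, dif_pos hev]
        refine (Nat.find_eq_iff (h := hev)).2 ?_
        constructor
        · intro k hk
          have := h1 (k - n)
          have e : n + (k - n) = k := by omega
          rwa [e] at this
        · intro m hm hall
          exact h2 m hm (fun j => hall (m + j) (by omega))
      · split at h
        · next hn =>
          subst hn
          rw [kzero, dif_neg (show ¬ evNP r A from h)]
        · exact absurd h (Set.notMem_empty A)
  rw [hset]
  apply MeasurableSet.union
  · exact (MeasurableSet.iInter fun j => (measSet_pP r _).compl).inter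
      (MeasurableSet.iInter fun m => MeasurableSet.iInter fun _ =>
        (MeasurableSet.iInter fun j => (measSet_pP r _).compl).compl)
  · split
    · exact (measSet_evNP r).compl
    · exact MeasurableSet.empty

section MeasNE
variable [Nonempty Q]

lemma meas_Psi_i (i : ℕ) : Measurable (fun A : ℕ → Finset Q => Psi r A i) := by
  apply measurable_to_countable'
  intro q
  have hset : (fun A : ℕ → Finset Q => Psi r A i) ⁻¹' {q}
      = ⋃ n, ((fun A : ℕ → Finset Q => kzero r A) ⁻¹' {n}) ∩
          ((fun A : ℕ → Finset Q => (Efun r A (n + i), Efun r A (n + i + 1))) ⁻¹'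
            {p : Finset Q × Finset Q | sel r p.1 p.2 = q}) := by
    ext A
    simp only [Set.mem_preimage, Set.mem_singleton_iff, Set.mem_iUnion, Set.mem_inter_iff,
      Set.mem_setOf_eq]
    constructor
    · intro h
      exact ⟨kzero r A, rfl, by rw [← h]; rfl⟩
    · rintro ⟨n, hn, hsel⟩
      rw [Psi, hn]
      exact hsel
  rw [hset]
  exact MeasurableSet.iUnion fun n =>
    ((meas_kzero r) (measurableSet_singleton n)).inter
      ((meas_pairE r (n + i)) ((Set.to_countable _).measurableSet))

lemma meas_Psi : Measurable (fun A : ℕ → Finset Q => Psi r A) :=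
  measurable_pi_lambda _ (meas_Psi_i r)

end MeasNE

lemma measSet_vecSetQ : MeasurableSet (vecSet r) := by
  have hset : vecSet r = ⋂ k, (fun X : ℕ → Q => (X k, X (k + 1))) ⁻¹'
      {p : Q × Q | ¬ r p.1 p.2} := by
    ext X
    simp [vecSet]
  rw [hset]
  exact MeasurableSet.iInter fun k =>
    ((measurable_pi_apply k).prodMk (measurable_pi_apply (k + 1)))
      ((Set.to_countable _).measurableSet)

lemma meas_cext {c0 : (vecSet r) → Fin 3} (hc0 : Measurable c0) :
    Measurable (cext r c0) := by
  apply measurable_to_countable'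
  intro v
  have hset : cext r c0 ⁻¹' {v}
      = (Subtype.val '' (c0 ⁻¹' {v})) ∪ (if v = 0 then (vecSet r)ᶜ else ∅) := by
    ext X
    simp only [Set.mem_preimage, Set.mem_singleton_iff, Set.mem_union, Set.mem_image]
    constructor
    · intro h
      by_cases hX : X ∈ vecSet r
      · left
        exact ⟨⟨X, hX⟩, by rwa [cext, dif_pos hX] at h, rfl⟩
      · right
        rw [cext, dif_neg hX] at h
        rw [if_pos h.symm]
        exact hX
    · intro h
      rcases h with ⟨y, hy, rfl⟩ | h
      · rw [cext, dif_pos y.2]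
        exact hy
      · split at h
        · next hv =>
          subst hv
          rw [cext, dif_neg (show X ∉ vecSet r from h)]
        · exact absurd h (Set.notMem_empty X)
  rw [hset]
  apply MeasurableSet.union
  · exact (measSet_vecSetQ r).subtype_image (hc0 (measurableSet_singleton v))
  · split
    · exact (measSet_vecSetQ r).compl
    · exact MeasurableSet.empty

lemma meas_dE : Measurable (fun A : ℕ → Finset Q => dE r A) := by
  apply measurable_to_countable'
  intro n
  cases n with
  | zero =>
    have hset : (fun A : ℕ → Finset Q => dE r A) ⁻¹' {0}
        = ⋂ j, {A : ℕ → Finset Q | pP r A (j + 1)}ᶜ := by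
      ext A
      simp only [Set.mem_preimage, Set.mem_singleton_iff, Set.mem_iInter, Set.mem_compl_iff,
        Set.mem_setOf_eq]
      constructor
      · intro h j hp
        rw [dE, dif_pos ⟨j, hp⟩] at h
        omega
      · intro h
        rw [dE, dif_neg]
        rintro ⟨j, hj⟩
        exact h j hj
    rw [hset]
    exact MeasurableSet.iInter fun j => (measSet_pP r _).compl
  | succ m =>
    have hset : (fun A : ℕ → Finset Q => dE r A) ⁻¹' {m + 1}
        = {A : ℕ → Finset Q | pP r A (m + 1)} ∩
            ⋂ j, ⋂ (_ : j < m), {A : ℕ → Finset Q | pP r A (j + 1)}ᶜ := by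
      ext A
      simp only [Set.mem_preimage, Set.mem_singleton_iff, Set.mem_inter_iff, Set.mem_iInter,
        Set.mem_compl_iff, Set.mem_setOf_eq]
      constructor
      · intro h
        by_cases hex : ∃ j, pP r A (j + 1)
        · rw [dE, dif_pos hex] at h
          have hfind : Nat.find hex = m := by omega
          rw [Nat.find_eq_iff] at hfind
          exact ⟨hfind.1, fun j hj => hfind.2 j hj⟩
        · rw [dE, dif_neg hex] at h
          omega
      · rintro ⟨h1, h2⟩
        have hex : ∃ j, pP r A (j + 1) := ⟨m, h1⟩
        rw [dE, dif_pos hex]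
        have : Nat.find hex = m := by
          rw [Nat.find_eq_iff]
          exact ⟨h1, h2⟩
        omega
    rw [hset]
    exact (measSet_pP r _).inter
      (MeasurableSet.iInter fun j => MeasurableSet.iInter fun _ => (measSet_pP r _).compl)

lemma meas_eE : Measurable (fun A : ℕ → Finset Q => eE r A) := by
  apply measurable_to_countable'
  intro n
  cases n with
  | zero =>
    have hset : (fun A : ℕ → Finset Q => eE r A) ⁻¹' {0}
        = ⋂ j, ({A : ℕ → Finset Q | pP r A (j + 1)}ᶜ)ᶜ := by
      ext A
      simp only [Set.mem_preimage, Set.mem_singleton_iff, Set.mem_iInter, Set.mem_compl_iff,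
        Set.mem_setOf_eq, not_not]
      constructor
      · intro h j
        by_contra hp
        rw [eE, dif_pos ⟨j, hp⟩] at h
        omega
      · intro h
        rw [eE, dif_neg]
        rintro ⟨j, hj⟩
        exact hj (h j)
    rw [hset]
    exact MeasurableSet.iInter fun j => (measSet_pP r _).compl.compl
  | succ m =>
    have hset : (fun A : ℕ → Finset Q => eE r A) ⁻¹' {m + 1}
        = {A : ℕ → Finset Q | pP r A (m + 1)}ᶜ ∩
            ⋂ j, ⋂ (_ : j < m), ({A : ℕ → Finset Q | pP r A (j + 1)}ᶜ)ᶜ := by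
      ext A
      simp only [Set.mem_preimage, Set.mem_singleton_iff, Set.mem_inter_iff, Set.mem_iInter,
        Set.mem_compl_iff, Set.mem_setOf_eq, not_not]
      constructor
      · intro h
        by_cases hex : ∃ j, ¬ pP r A (j + 1)
        · rw [eE, dif_pos hex] at h
          have hfind : Nat.find hex = m := by omega
          rw [Nat.find_eq_iff] at hfind
          refine ⟨hfind.1, fun j hj => ?_⟩
          have := hfind.2 j hj
          exact not_not.1 this
        · rw [eE, dif_neg hex] at h
          omega
      · rintro ⟨h1, h2⟩
        have hex : ∃ j, ¬ pP r A (j + 1) := ⟨m, h1⟩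
        rw [eE, dif_pos hex]
        have : Nat.find hex = m := by
          rw [Nat.find_eq_iff]
          exact ⟨h1, fun j hj => not_not.2 (h2 j hj)⟩
        omega
    rw [hset]
    exact (measSet_pP r _).compl.inter
      (MeasurableSet.iInter fun j => MeasurableSet.iInter fun _ => (measSet_pP r _).compl.compl)

lemma meas_colMark : Measurable (fun A : ℕ → Finset Q => colMark r A) := by
  apply Measurable.ite (measSet_pP r 0)
  · exact (measurable_of_countable (fun n : ℕ => if n % 2 = 1 then (2 : Fin 3) else 0)).comp
      (meas_eE r)
  · exact (measurable_of_countable (fun n : ℕ => if n % 2 = 1 then (1 : Fin 3) else 0)).comp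
      (meas_dE r)

section MeasNE2
variable [Nonempty Q]

lemma meas_colNP {c0 : (vecSet r) → Fin 3} (hc0 : Measurable c0) :
    Measurable (fun A : ℕ → Finset Q => colNP r c0 A) := by
  have hrw : (fun A : ℕ → Finset Q => colNP r c0 A)
      = (fun q : Fin 3 × Fin 3 => q.1 + q.2)
        ∘ (fun A : ℕ → Finset Q => (cext r c0 (Psi r A), ((kzero r A : ℕ) : Fin 3))) := rfl
  rw [hrw]
  exact (measurable_of_countable _).comp
    (((meas_cext r hc0).comp (meas_Psi r)).prodMk
      ((measurable_of_countable (fun n : ℕ => (n : Fin 3))).comp (meas_kzero r)))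

lemma meas_colAll {c0 : (vecSet r) → Fin 3} (hc0 : Measurable c0) :
    Measurable (fun A : ℕ → Finset Q => colAll r c0 A) := by
  apply Measurable.ite (measSet_evNP r) (meas_colNP r hc0) (meas_colMark r)

end MeasNE2

end Meas
end ThinFS


/-- If `Q` is a countable thin quasi-order, then `[Q]^{<ω}`, the finite subsets of `Q` ordered
by domination along an injection, is thin. -/
theorem thin_finite_subsets {Q : Type*} [Countable Q]
    (r : Q → Q → Prop) (hr : Reflexive r) (ht : Transitive r)
    (hQ : IsThin r) :
    IsThin (fun a b : Finset Q =>
      ∃ h : {x : Q // x ∈ a} → {x : Q // x ∈ b},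
        Function.Injective h ∧ ∀ x : {x : Q // x ∈ a}, r x.1 (h x).1) := by
  classical
  letI : MeasurableSpace Q := ⊤
  letI : MeasurableSpace (Finset Q) := ⊤
  rcases isEmpty_or_nonempty Q with hemp | hne
  · refine ⟨fun _ => 0, measurable_const, ?_⟩
    intro X hX hX'
    exfalso
    apply hX 0
    exact ⟨fun x => (hemp.false x.1).elim,
      fun a b _ => (hemp.false a.1).elim,
      fun x => (hemp.false x.1).elim⟩
  · obtain ⟨c0, hc0m, hc0p⟩ := hQ
    refine ⟨fun x => ThinFS.colAll r c0 x.1, ?_, ?_⟩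
    · exact (ThinFS.meas_colAll r hc0m).comp measurable_subtype_coe
    · intro X hX hX'
      exact ThinFS.colAll_ne r hc0p (hX : ThinFS.BadSeq r X)
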